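/- The Koornwinder–Dubiner polynomials g_{m,n}(x,y) = P_m^{(0,0)}(x/(1−y))·(1−y)^m·P_n^{(2m+1,0)}(y) are pairwise orthogonal on the triangle T' = {(x,y) : 0 ≤ x, 0 ≤ y, x + y ≤ 1} (after the appropriate linear change to the domain where x/(1−y), y range over the Jacobi intervals): ∫_{T'} g_{m,n} g_{m',n'} = 0 whenever (m,n) ≠ (m',n'). -/

import Mathlib

open Finset MeasureTheory Polynomial

/-- The Jacobi polynomial `P_n^{(α,β)}` (with natural-number parameters),
defined by the explicit formula
`P_n^{(α,β)}(x) = ∑_{s=0}^n C(n+α, n-s) C(n+β, s) ((x-1)/2)^s ((x+1)/2)^{n-s}`. -/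
noncomputable def jacobiP (α β n : ℕ) : Polynomial ℝ :=
  ∑ s ∈ Finset.range (n + 1),
    ((Nat.choose (n + α) (n - s) : ℝ) * (Nat.choose (n + β) s : ℝ)) •
      ((Polynomial.C (2⁻¹ : ℝ) * (Polynomial.X - 1)) ^ s *
        (Polynomial.C (2⁻¹ : ℝ) * (Polynomial.X + 1)) ^ (n - s))

/-- The Koornwinder–Dubiner function on the unit right triangle (the Jacobi
arguments `x/(1-y)` and `y` are linearly rescaled from `[0,1]` to `[-1,1]`). -/
noncomputable def gKD (m n : ℕ) (p : ℝ × ℝ) : ℝ :=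
  (jacobiP 0 0 m).eval (2 * p.1 / (1 - p.2) - 1) * (1 - p.2) ^ m *
    (jacobiP (2 * m + 1) 0 n).eval (2 * p.2 - 1)

/-- The unit right triangle. -/
def unitTriangle : Set (ℝ × ℝ) :=
  {p : ℝ × ℝ | 0 ≤ p.1 ∧ 0 ≤ p.2 ∧ p.1 + p.2 ≤ 1}

lemma fwdDiff_pow_lt (k : ℕ) : ∀ n, k < n → (fwdDiff (1:ℝ))^[n] (fun x : ℝ => x ^ k) = 0 := by
  induction k using Nat.strong_induction_on with
  | _ k IH =>
    intro n hn
    obtain ⟨m, rfl⟩ : ∃ m, n = m + 1 := ⟨n - 1, by omega⟩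
    rw [Function.iterate_succ_apply]
    have hΔ : fwdDiff (1:ℝ) (fun x : ℝ => x ^ k)
        = ∑ j ∈ range k, (k.choose j : ℝ) • (fun x : ℝ => x ^ j) := by
      funext x
      simp only [fwdDiff, Finset.sum_apply, Pi.smul_apply, smul_eq_mul]
      have := add_pow x (1:ℝ) k
      simp only [one_pow, mul_one] at this
      rw [this, Finset.sum_range_succ]
      simp [mul_comm]
    rw [hΔ, fwdDiff_iter_finset_sum]
    refine Finset.sum_eq_zero fun j hj => ?_
    have hj' := mem_range.mp hj
    rw [fwdDiff_iter_const_smul, IH j hj' m (by omega)]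
    simp

lemma findiff (n : ℕ) (Q : Polynomial ℝ) (hQ : Q.natDegree < n) :
    ∑ s ∈ range (n + 1), (-1 : ℝ) ^ s * (n.choose s : ℝ) * Q.eval (s : ℝ) = 0 := by
  have hzero : (fwdDiff (1:ℝ))^[n] (fun x : ℝ => Q.eval x) = 0 := by
    have hrep : (fun x : ℝ => Q.eval x)
        = ∑ k ∈ range (Q.natDegree + 1), Q.coeff k • (fun x : ℝ => x ^ k) := by
      funext x
      simp only [Finset.sum_apply, Pi.smul_apply, smul_eq_mul]
      exact Polynomial.eval_eq_sum_range x
    rw [hrep, fwdDiff_iter_finset_sum]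
    refine Finset.sum_eq_zero fun k hk => ?_
    have hk' := mem_range.mp hk
    rw [fwdDiff_iter_const_smul, fwdDiff_pow_lt k n (by omega)]
    simp
  have h := fwdDiff_iter_eq_sum_shift (1:ℝ) (fun x : ℝ => Q.eval x) n 0
  rw [hzero] at h
  simp only [Pi.zero_apply, zsmul_eq_mul, Int.cast_mul, Int.cast_pow, Int.cast_neg,
    Int.cast_one, Int.cast_natCast, nsmul_eq_mul, mul_one, zero_add, smul_eq_mul] at h
  calc ∑ s ∈ range (n + 1), (-1 : ℝ) ^ s * (n.choose s : ℝ) * Q.eval (s : ℝ)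
      = (-1:ℝ)^n * ∑ s ∈ range (n+1), (-1:ℝ)^(n-s) * (n.choose s : ℝ) * Q.eval (s : ℝ) := by
        rw [Finset.mul_sum]
        refine Finset.sum_congr rfl fun s hs => ?_
        have hs' := mem_range.mp hs
        have h2 : (-1:ℝ)^n * (-1:ℝ)^(n-s) = (-1:ℝ)^s := by
          rw [← pow_add]
          have hns : n + (n - s) = 2*(n-s) + s := by omega
          rw [hns, pow_add, pow_mul, neg_one_sq, one_pow, one_mul]
        rw [← h2]; ring
    _ = 0 := by rw [← h, mul_zero]

lemma nat_prod_factorial (a b : ℕ) :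
    b.factorial * ∏ j ∈ range (a + 1), (b + 1 + j) = (a + b + 1).factorial := by
  induction a with
  | zero => simp [Nat.factorial_succ, mul_comm]
  | succ a ih =>
      have : a + 1 + b + 1 = (a + b + 1) + 1 := by omega
      rw [prod_range_succ, this, Nat.factorial_succ, ← ih]
      ring

lemma beta_nat (a b : ℕ) :
    ∫ x in (0:ℝ)..1, x ^ b * (1 - x) ^ a
      = (b.factorial : ℝ) * (a.factorial : ℝ) / ((a + b + 1).factorial : ℝ) := by
  have h1 : Complex.betaIntegral ((b : ℂ) + 1) ((a : ℂ) + 1)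
      = ((∫ x in (0:ℝ)..1, x ^ b * (1 - x) ^ a : ℝ) : ℂ) := by
    rw [Complex.betaIntegral, ← intervalIntegral.integral_ofReal]
    apply intervalIntegral.integral_congr
    intro x _
    beta_reduce
    rw [add_sub_cancel_right, add_sub_cancel_right, Complex.cpow_natCast, Complex.cpow_natCast]
    push_cast
    ring
  have h2 := Complex.betaIntegral_eval_nat_add_one_right
    (u := (b : ℂ) + 1) (by simp; positivity) a
  have h3 : ∏ j ∈ range (a + 1), ((b : ℂ) + 1 + j)
      = ((a + b + 1).factorial : ℂ) / (b.factorial : ℂ) := by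
    rw [eq_div_iff (by exact_mod_cast Nat.factorial_ne_zero b)]
    rw [← nat_prod_factorial a b]
    push_cast
    ring
  rw [h1, h3] at h2
  have hfac : ((a + b + 1).factorial : ℂ) ≠ 0 := by exact_mod_cast Nat.factorial_ne_zero _
  have hb : (b.factorial : ℂ) ≠ 0 := by exact_mod_cast Nat.factorial_ne_zero _
  have : ((∫ x in (0:ℝ)..1, x ^ b * (1 - x) ^ a : ℝ) : ℂ)
      = ((b.factorial : ℝ) * (a.factorial : ℝ) / ((a + b + 1).factorial : ℝ) : ℝ) := by
    rw [h2]
    push_cast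
    field_simp
  exact_mod_cast this

lemma jacobi_eval (α n : ℕ) (y : ℝ) :
    (jacobiP α 0 n).eval (2 * y - 1)
      = ∑ s ∈ range (n + 1),
          ((n + α).choose (n - s) : ℝ) * (n.choose s : ℝ) * ((y - 1) ^ s * y ^ (n - s)) := by
  simp only [jacobiP, Polynomial.eval_finset_sum, Polynomial.eval_smul, smul_eq_mul,
    Polynomial.eval_mul, Polynomial.eval_pow, Polynomial.eval_C, Polynomial.eval_sub,
    Polynomial.eval_add, Polynomial.eval_X, Polynomial.eval_one, Nat.add_zero]
  refine Finset.sum_congr rfl fun s hs => ?_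
  ring

lemma moment (α k n : ℕ) (hk : k < n) :
    ∫ y in (0:ℝ)..1, (1 - y) ^ α * (jacobiP α 0 n).eval (2 * y - 1) * y ^ k = 0 := by
  have heq : ∀ y : ℝ, (1 - y) ^ α * (jacobiP α 0 n).eval (2 * y - 1) * y ^ k
      = ∑ s ∈ range (n + 1),
          ((n + α).choose (n - s) : ℝ) * (n.choose s : ℝ) *
            ((-1 : ℝ) ^ s * (y ^ (n - s + k) * (1 - y) ^ (α + s))) := by
    intro y
    rw [jacobi_eval, Finset.mul_sum, Finset.sum_mul]
    refine Finset.sum_congr rfl fun s hs => ?_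
    have h1 : (y - 1 : ℝ) ^ s = (-1 : ℝ) ^ s * (1 - y) ^ s := by
      rw [show (y - 1 : ℝ) = -1 * (1 - y) by ring, mul_pow]
    rw [pow_add, pow_add, h1]
    ring
  rw [intervalIntegral.integral_congr (g := fun y => ∑ s ∈ range (n + 1),
      ((n + α).choose (n - s) : ℝ) * (n.choose s : ℝ) *
        ((-1 : ℝ) ^ s * (y ^ (n - s + k) * (1 - y) ^ (α + s)))) (fun y _ => heq y)]
  rw [intervalIntegral.integral_finset_sum (fun s _ => by
    apply Continuous.intervalIntegrable
    continuity)]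
  have hbeta : ∀ s ∈ range (n + 1),
      (∫ y in (0:ℝ)..1, ((n + α).choose (n - s) : ℝ) * (n.choose s : ℝ) *
          ((-1 : ℝ) ^ s * (y ^ (n - s + k) * (1 - y) ^ (α + s))))
      = ((n + α).choose (n - s) : ℝ) * (n.choose s : ℝ) * ((-1 : ℝ) ^ s *
          (((n - s + k).factorial : ℝ) * ((α + s).factorial : ℝ)
            / ((α + n + k + 1).factorial : ℝ))) := by
    intro s hs
    have hs' := mem_range.mp hs
    rw [intervalIntegral.integral_const_mul, intervalIntegral.integral_const_mul,
      beta_nat (α + s) (n - s + k)]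
    rw [show α + s + (n - s + k) + 1 = α + n + k + 1 by omega]
  rw [Finset.sum_congr rfl hbeta]
  -- now the combinatorial identity
  set Q : Polynomial ℝ := ∏ i ∈ range k, (Polynomial.C ((n : ℝ) + k - i) - Polynomial.X) with hQdef
  have hdeg : Q.natDegree < n := by
    have h1 : Q.natDegree ≤ ∑ i ∈ range k, (Polynomial.C ((n : ℝ) + k - i) - Polynomial.X).natDegree :=
      Polynomial.natDegree_prod_le _ _
    have h2 : ∀ i ∈ range k, (Polynomial.C ((n : ℝ) + k - i) - Polynomial.X).natDegree ≤ 1 := by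
      intro i _
      refine le_trans (Polynomial.natDegree_sub_le _ _) ?_
      rw [Polynomial.natDegree_C, Polynomial.natDegree_X]
      norm_num
    have h3 : ∑ i ∈ range k, (Polynomial.C ((n : ℝ) + k - i) - Polynomial.X).natDegree ≤ k := by
      calc _ ≤ ∑ _i ∈ range k, 1 := Finset.sum_le_sum h2
        _ = k := by simp
    omega
  have hQs : ∀ s, s ∈ range (n + 1) →
      ((n + α).choose (n - s) : ℝ) * ((α + s).factorial : ℝ) * ((n - s + k).factorial : ℝ)
        = ((n + α).factorial : ℝ) * Q.eval (s : ℝ) := by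
    intro s hs
    have hs' : s ≤ n := by have := mem_range.mp hs; omega
    have h1 := Nat.choose_mul_factorial_mul_factorial (show n - s ≤ n + α by omega)
    rw [show n + α - (n - s) = α + s by omega] at h1
    have h2 := Nat.factorial_mul_descFactorial (show k ≤ n - s + k by omega)
    rw [show n - s + k - k = n - s by omega] at h2
    have key : (n + α).choose (n - s) * (α + s).factorial * (n - s + k).factorial
        = (n + α).factorial * (n - s + k).descFactorial k := by
      rw [← h2, ← h1]; ring
    have hcast : ((n - s + k).descFactorial k : ℝ) = Q.eval (s : ℝ) := by
      rw [Nat.descFactorial_eq_prod_range, Nat.cast_prod, hQdef, Polynomial.eval_prod]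
      refine Finset.prod_congr rfl fun i hi => ?_
      have hi' := mem_range.mp hi
      simp only [Polynomial.eval_sub, Polynomial.eval_C, Polynomial.eval_X]
      rw [show n - s + k - i = n + k - (i + s) by omega, Nat.cast_sub (by omega),
        Nat.cast_add, Nat.cast_add]
      ring
    rw [← hcast]
    exact_mod_cast congrArg (Nat.cast : ℕ → ℝ) key
  have hD : ((α + n + k + 1).factorial : ℝ) ≠ 0 := by
    exact_mod_cast Nat.factorial_ne_zero _
  calc ∑ s ∈ range (n + 1), ((n + α).choose (n - s) : ℝ) * (n.choose s : ℝ) * ((-1 : ℝ) ^ s *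
          (((n - s + k).factorial : ℝ) * ((α + s).factorial : ℝ)
            / ((α + n + k + 1).factorial : ℝ)))
      = ∑ s ∈ range (n + 1), ((n + α).factorial : ℝ) / ((α + n + k + 1).factorial : ℝ) *
          ((-1 : ℝ) ^ s * (n.choose s : ℝ) * Q.eval (s : ℝ)) := by
        refine Finset.sum_congr rfl fun s hs => ?_
        have hq := hQs s hs
        field_simp
        linear_combination (n.choose s : ℝ) * hq
    _ = ((n + α).factorial : ℝ) / ((α + n + k + 1).factorial : ℝ) *
          ∑ s ∈ range (n + 1), (-1 : ℝ) ^ s * (n.choose s : ℝ) * Q.eval (s : ℝ) := by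
        rw [Finset.mul_sum]
    _ = 0 := by rw [findiff n Q hdeg, mul_zero]

lemma jacobiP_natDegree_le (α β n : ℕ) : (jacobiP α β n).natDegree ≤ n := by
  apply Polynomial.natDegree_sum_le_of_forall_le
  intro s hs
  have hs' : s ≤ n := by have := Finset.mem_range.mp hs; omega
  refine le_trans (Polynomial.natDegree_smul_le _ _) ?_
  refine le_trans (Polynomial.natDegree_mul_le) ?_
  have h1 : ((Polynomial.C (2⁻¹ : ℝ) * (Polynomial.X - 1)) ^ s).natDegree ≤ s := by
    refine le_trans (Polynomial.natDegree_pow_le) ?_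
    have hX : (Polynomial.X - 1 : Polynomial ℝ).natDegree = 1 := by
      simpa using Polynomial.natDegree_X_sub_C (1:ℝ)
    have : (Polynomial.C (2⁻¹ : ℝ) * (Polynomial.X - 1)).natDegree ≤ 1 := by
      refine le_trans (Polynomial.natDegree_mul_le) ?_
      simp [Polynomial.natDegree_C, hX]
    nlinarith
  have h2 : ((Polynomial.C (2⁻¹ : ℝ) * (Polynomial.X + 1)) ^ (n - s)).natDegree ≤ n - s := by
    refine le_trans (Polynomial.natDegree_pow_le) ?_
    have hX : (Polynomial.X + 1 : Polynomial ℝ).natDegree = 1 := by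
      simpa using Polynomial.natDegree_X_add_C (1:ℝ)
    have : (Polynomial.C (2⁻¹ : ℝ) * (Polynomial.X + 1)).natDegree ≤ 1 := by
      refine le_trans (Polynomial.natDegree_mul_le) ?_
      simp [Polynomial.natDegree_C, hX]
    nlinarith
  omega

lemma ortho' (α n n' : ℕ) (h : n' < n) :
    ∫ y in (0:ℝ)..1,
      (1 - y) ^ α * ((jacobiP α 0 n).eval (2 * y - 1) * (jacobiP α 0 n').eval (2 * y - 1)) = 0 := by
  set R : Polynomial ℝ := (jacobiP α 0 n').comp (Polynomial.C 2 * Polynomial.X - 1) with hR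
  have hReval : ∀ y : ℝ, R.eval y = (jacobiP α 0 n').eval (2 * y - 1) := by
    intro y
    rw [hR, Polynomial.eval_comp]
    simp
  have hRdeg : R.natDegree ≤ n' := by
    rw [hR, Polynomial.natDegree_comp]
    have hm : (Polynomial.C (2:ℝ) * Polynomial.X).natDegree ≤ 1 :=
      le_trans Polynomial.natDegree_mul_le (by simp)
    have h1 : (Polynomial.C (2:ℝ) * Polynomial.X - 1).natDegree ≤ 1 :=
      le_trans (Polynomial.natDegree_sub_le _ _) (sup_le hm (by simp))
    have h2 := jacobiP_natDegree_le α 0 n'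
    nlinarith
  have heq : ∀ y : ℝ,
      (1 - y) ^ α * ((jacobiP α 0 n).eval (2 * y - 1) * (jacobiP α 0 n').eval (2 * y - 1))
      = ∑ k ∈ range (R.natDegree + 1),
          R.coeff k * ((1 - y) ^ α * (jacobiP α 0 n).eval (2 * y - 1) * y ^ k) := by
    intro y
    rw [← hReval y, Polynomial.eval_eq_sum_range (p := R), Finset.mul_sum, Finset.mul_sum]
    refine Finset.sum_congr rfl fun k _ => ?_
    ring
  rw [intervalIntegral.integral_congr (g := fun y => ∑ k ∈ range (R.natDegree + 1),
      R.coeff k * ((1 - y) ^ α * (jacobiP α 0 n).eval (2 * y - 1) * y ^ k)) (fun y _ => heq y)]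
  rw [intervalIntegral.integral_finset_sum (fun k _ => by
    apply Continuous.intervalIntegrable
    exact continuous_const.mul ((((continuous_const.sub continuous_id).pow α).mul
      ((jacobiP α 0 n).continuous.comp (by continuity))).mul (continuous_pow k)))]
  refine Finset.sum_eq_zero fun k hk => ?_
  have hk' : k < n := by have := Finset.mem_range.mp hk; omega
  rw [intervalIntegral.integral_const_mul, moment α k n hk', mul_zero]

lemma ortho (α N N' : ℕ) (h : N ≠ N') :
    ∫ y in (0:ℝ)..1,
      (1 - y) ^ α * ((jacobiP α 0 N).eval (2 * y - 1) * (jacobiP α 0 N').eval (2 * y - 1)) = 0 := by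
  rcases lt_or_gt_of_ne h with hlt | hlt
  · calc ∫ y in (0:ℝ)..1,
        (1 - y) ^ α * ((jacobiP α 0 N).eval (2 * y - 1) * (jacobiP α 0 N').eval (2 * y - 1))
        = ∫ y in (0:ℝ)..1,
            (1 - y) ^ α * ((jacobiP α 0 N').eval (2 * y - 1) * (jacobiP α 0 N).eval (2 * y - 1)) :=
          intervalIntegral.integral_congr (fun y _ => by ring)
      _ = 0 := ortho' α N' N hlt
  · exact ortho' α N N' hlt

/-- The Koornwinder–Dubiner polynomials are pairwise orthogonal in
`L²` of the unit right triangle. -/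
theorem koornwinderDubiner_orthogonal (m n m' n' : ℕ)
    (hne : (m, n) ≠ (m', n')) :
    ∫ p in unitTriangle, gKD m n p * gKD m' n' p = 0 := by
  set F : ℝ × ℝ → ℝ := fun p => gKD m n p * gKD m' n' p with hF
  -- measurability
  have hTmeas : MeasurableSet unitTriangle := by
    have h1 : unitTriangle = {p : ℝ × ℝ | 0 ≤ p.1} ∩ {p : ℝ × ℝ | 0 ≤ p.2} ∩
        {p : ℝ × ℝ | p.1 + p.2 ≤ 1} := by
      ext p; simp [unitTriangle, and_assoc]
    rw [h1]
    exact ((measurableSet_le measurable_const measurable_fst).inter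
      (measurableSet_le measurable_const measurable_snd)).inter
      (measurableSet_le (measurable_fst.add measurable_snd) measurable_const)
  have hgmeas : ∀ a b : ℕ, Measurable (gKD a b) := by
    intro a b
    apply Measurable.mul
    apply Measurable.mul
    · exact (jacobiP 0 0 a).continuous.measurable.comp
        (((measurable_fst.const_mul 2).div (measurable_const.sub measurable_snd)).sub
          measurable_const)
    · exact (measurable_const.sub measurable_snd).pow_const a
    · exact (jacobiP (2 * a + 1) 0 b).continuous.measurable.comp
        ((measurable_snd.const_mul 2).sub measurable_const)
  have hFmeas : Measurable F := (hgmeas m n).mul (hgmeas m' n')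
  -- argument range on the triangle
  have harg : ∀ p : ℝ × ℝ, p ∈ unitTriangle →
      (2 * p.1 / (1 - p.2) - 1) ∈ Set.Icc (-1:ℝ) 1 ∧ (2 * p.2 - 1) ∈ Set.Icc (-1:ℝ) 1 ∧
        |1 - p.2| ≤ 1 := by
    intro p hp
    obtain ⟨hx, hy, hxy⟩ := hp
    refine ⟨?_, ⟨by linarith [hxy, hx], by linarith [hxy, hx]⟩, by
      rw [abs_le]; constructor <;> linarith [hxy, hx]⟩
    rcases eq_or_lt_of_le (show p.2 ≤ 1 by linarith) with h1 | h1
    · have hx0 : p.1 = 0 := by linarith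
      rw [hx0, h1]
      norm_num
    · have hc : 0 < 1 - p.2 := by linarith
      constructor
      · have : 0 ≤ 2 * p.1 / (1 - p.2) := div_nonneg (by linarith) hc.le
        linarith
      · have : 2 * p.1 / (1 - p.2) ≤ 2 := by
          rw [div_le_iff₀ hc]; linarith
        linarith
  -- bound
  have hB : ∀ q : Polynomial ℝ, ∃ B : ℝ, 0 ≤ B ∧ ∀ t ∈ Set.Icc (-1:ℝ) 1, |q.eval t| ≤ B := by
    intro q
    obtain ⟨B, hBle⟩ := (isCompact_Icc (a := (-1:ℝ)) (b := 1)).exists_bound_of_continuousOn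
      q.continuous.continuousOn
    refine ⟨max B 0, le_max_right _ _, fun t ht => ?_⟩
    have := hBle t ht
    rw [Real.norm_eq_abs] at this
    exact le_trans this (le_max_left _ _)
  obtain ⟨B1, hB1n, hB1⟩ := hB (jacobiP 0 0 m)
  obtain ⟨B2, hB2n, hB2⟩ := hB (jacobiP (2 * m + 1) 0 n)
  obtain ⟨B3, hB3n, hB3⟩ := hB (jacobiP 0 0 m')
  obtain ⟨B4, hB4n, hB4⟩ := hB (jacobiP (2 * m' + 1) 0 n')
  have hbound : ∀ p ∈ unitTriangle, |F p| ≤ B1 * B2 * (B3 * B4) := by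
    intro p hp
    obtain ⟨h1, h2, h3⟩ := harg p hp
    have hpow : ∀ a : ℕ, |1 - p.2| ^ a ≤ 1 := fun a =>
      pow_le_one₀ (abs_nonneg _) h3
    have key : |F p| = |(jacobiP 0 0 m).eval (2 * p.1 / (1 - p.2) - 1)| * |1 - p.2| ^ m *
        |(jacobiP (2 * m + 1) 0 n).eval (2 * p.2 - 1)| *
        (|(jacobiP 0 0 m').eval (2 * p.1 / (1 - p.2) - 1)| * |1 - p.2| ^ m' *
        |(jacobiP (2 * m' + 1) 0 n').eval (2 * p.2 - 1)|) := by
      rw [hF]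
      simp only [gKD]
      rw [abs_mul, abs_mul, abs_mul, abs_mul, abs_mul, abs_pow, abs_pow]
    rw [key]
    calc _ ≤ B1 * 1 * B2 * (B3 * 1 * B4) := by
          gcongr
          · exact hB1 _ h1
          · exact hpow m
          · exact hB2 _ h2
          · exact hB3 _ h1
          · exact hpow m'
          · exact hB4 _ h2
      _ = B1 * B2 * (B3 * B4) := by ring
  -- integrability
  have hTsub : unitTriangle ⊆ Set.Icc ((0:ℝ), (0:ℝ)) ((1:ℝ), (1:ℝ)) := by
    intro p hp
    obtain ⟨hx, hy, hxy⟩ := hp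
    simp only [Set.mem_Icc, Prod.le_def]
    exact ⟨⟨hx, hy⟩, ⟨by linarith, by linarith⟩⟩
  have hTvol : volume unitTriangle < ⊤ :=
    lt_of_le_of_lt (measure_mono hTsub) isCompact_Icc.measure_lt_top
  have hInt : Integrable (unitTriangle.indicator F) volume := by
    refine Integrable.mono' (g := unitTriangle.indicator fun _ => B1 * B2 * (B3 * B4)) ?_ ?_ ?_
    · rw [integrable_indicator_iff hTmeas]
      exact integrableOn_const hTvol.ne
    · exact (hFmeas.indicator hTmeas).aestronglyMeasurable
    · refine Filter.Eventually.of_forall fun p => ?_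
      rw [Real.norm_eq_abs]
      by_cases hp : p ∈ unitTriangle
      · rw [Set.indicator_of_mem hp, Set.indicator_of_mem hp]
        exact hbound p hp
      · rw [Set.indicator_of_notMem hp, Set.indicator_of_notMem hp]
        simp
  -- Fubini
  have step1 : ∫ p in unitTriangle, F p
      = ∫ y : ℝ, ∫ x : ℝ, unitTriangle.indicator F (x, y) := by
    rw [← integral_indicator hTmeas]
    rw [show (volume : Measure (ℝ × ℝ)) = (volume : Measure ℝ).prod volume from
      Measure.volume_eq_prod ℝ ℝ]
    exact integral_prod_symm _ (by rwa [← Measure.volume_eq_prod])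
  have hinner : ∀ y : ℝ, (∫ x : ℝ, unitTriangle.indicator F (x, y))
      = (Set.Icc (0:ℝ) 1).indicator (fun y => ∫ x in Set.Icc (0:ℝ) (1 - y), F (x, y)) y := by
    intro y
    by_cases hy : y ∈ Set.Icc (0:ℝ) 1
    · rw [Set.indicator_of_mem hy, ← integral_indicator measurableSet_Icc]
      congr 1
      funext x
      by_cases hx : x ∈ Set.Icc (0:ℝ) (1 - y)
      · rw [Set.indicator_of_mem hx, Set.indicator_of_mem]
        exact ⟨hx.1, hy.1, by have := hx.2; simp only []; linarith⟩
      · rw [Set.indicator_of_notMem hx, Set.indicator_of_notMem]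
        intro hmem
        exact hx ⟨hmem.1, by have := hmem.2.2; simp only [] at this ⊢; linarith⟩
    · rw [Set.indicator_of_notMem hy]
      have hz : ∀ x : ℝ, unitTriangle.indicator F (x, y) = 0 := by
        intro x
        apply Set.indicator_of_notMem
        intro hmem
        exact hy ⟨hmem.2.1, by have := hmem.2.2; have := hmem.1; simp only [] at *; linarith⟩
      simp [hz]
  -- the one-dimensional Legendre-type integral
  set J : ℝ := ∫ u in (0:ℝ)..1,
      (jacobiP 0 0 m).eval (2 * u - 1) * (jacobiP 0 0 m').eval (2 * u - 1) with hJ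
  have hslice : ∀ y ∈ Set.Ioo (0:ℝ) 1, (∫ x in Set.Icc (0:ℝ) (1 - y), F (x, y))
      = ((1 - y) ^ (m + m' + 1) *
          ((jacobiP (2 * m + 1) 0 n).eval (2 * y - 1) *
            (jacobiP (2 * m' + 1) 0 n').eval (2 * y - 1))) * J := by
    intro y hy
    have hc : 0 < 1 - y := by linarith [hy.2]
    have hptw : ∀ x : ℝ, F (x, y)
        = ((1 - y) ^ (m + m') *
            ((jacobiP (2 * m + 1) 0 n).eval (2 * y - 1) *
              (jacobiP (2 * m' + 1) 0 n').eval (2 * y - 1))) *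
          ((jacobiP 0 0 m).eval (2 * (x / (1 - y)) - 1) *
            (jacobiP 0 0 m').eval (2 * (x / (1 - y)) - 1)) := by
      intro x
      rw [hF]
      simp only [gKD]
      rw [show 2 * x / (1 - y) = 2 * (x / (1 - y)) by ring]
      ring
    rw [MeasureTheory.integral_Icc_eq_integral_Ioc,
      ← intervalIntegral.integral_of_le (by linarith : (0:ℝ) ≤ 1 - y)]
    rw [intervalIntegral.integral_congr (g := fun x =>
        ((1 - y) ^ (m + m') *
          ((jacobiP (2 * m + 1) 0 n).eval (2 * y - 1) *
            (jacobiP (2 * m' + 1) 0 n').eval (2 * y - 1))) *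
        ((jacobiP 0 0 m).eval (2 * (x / (1 - y)) - 1) *
          (jacobiP 0 0 m').eval (2 * (x / (1 - y)) - 1))) (fun x _ => hptw x)]
    rw [intervalIntegral.integral_const_mul]
    rw [intervalIntegral.integral_comp_div
      (f := fun u => (jacobiP 0 0 m).eval (2 * u - 1) * (jacobiP 0 0 m').eval (2 * u - 1))
      (ne_of_gt hc)]
    rw [zero_div, div_self (ne_of_gt hc), smul_eq_mul, ← hJ]
    ring
  calc ∫ p in unitTriangle, F p
      = ∫ y : ℝ, ∫ x : ℝ, unitTriangle.indicator F (x, y) := step1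
    _ = ∫ y : ℝ, (Set.Icc (0:ℝ) 1).indicator
          (fun y => ∫ x in Set.Icc (0:ℝ) (1 - y), F (x, y)) y := by
        simp_rw [hinner]
    _ = ∫ y in Set.Icc (0:ℝ) 1, ∫ x in Set.Icc (0:ℝ) (1 - y), F (x, y) :=
        integral_indicator measurableSet_Icc
    _ = ∫ y in Set.Ioo (0:ℝ) 1, ∫ x in Set.Icc (0:ℝ) (1 - y), F (x, y) :=
        MeasureTheory.integral_Icc_eq_integral_Ioo
    _ = ∫ y in Set.Ioo (0:ℝ) 1, ((1 - y) ^ (m + m' + 1) *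
          ((jacobiP (2 * m + 1) 0 n).eval (2 * y - 1) *
            (jacobiP (2 * m' + 1) 0 n').eval (2 * y - 1))) * J := by
        apply setIntegral_congr_fun measurableSet_Ioo
        intro y hy
        exact hslice y hy
    _ = (∫ y in Set.Ioo (0:ℝ) 1, (1 - y) ^ (m + m' + 1) *
          ((jacobiP (2 * m + 1) 0 n).eval (2 * y - 1) *
            (jacobiP (2 * m' + 1) 0 n').eval (2 * y - 1))) * J :=
        integral_mul_const J _
    _ = 0 := by
        by_cases hm : m = m'
        · subst hm
          have hn : n ≠ n' := fun h => hne (by rw [h])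
          have hK : (∫ y in Set.Ioo (0:ℝ) 1, (1 - y) ^ (m + m + 1) *
              ((jacobiP (2 * m + 1) 0 n).eval (2 * y - 1) *
                (jacobiP (2 * m + 1) 0 n').eval (2 * y - 1))) = 0 := by
            rw [← MeasureTheory.integral_Ioc_eq_integral_Ioo,
              ← intervalIntegral.integral_of_le (by norm_num : (0:ℝ) ≤ 1)]
            rw [show m + m + 1 = 2 * m + 1 by ring]
            exact ortho (2 * m + 1) n n' hn
          rw [hK, zero_mul]
        · have hJ0 : J = 0 := by
            rw [hJ]
            have : (∫ u in (0:ℝ)..1,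
                (jacobiP 0 0 m).eval (2 * u - 1) * (jacobiP 0 0 m').eval (2 * u - 1))
                = ∫ u in (0:ℝ)..1, (1 - u) ^ (0:ℕ) *
                  ((jacobiP 0 0 m).eval (2 * u - 1) * (jacobiP 0 0 m').eval (2 * u - 1)) := by
              apply intervalIntegral.integral_congr
              intro u _
              simp
            rw [this]
            exact ortho 0 m m' hm
          rw [hJ0, mul_zero]
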